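/- Difference equation: 𝔊_{n,q}^{(α)}(x,0) + 𝔊_{n,q}^{(α)}(x,-1) = 2[n]_q 𝔊_{n-1,q}^{(α-1)}(x,-1) for n ≥ 1 and α ≥ 1. -/

import Mathlib

open PowerSeries Finset

/-- The `q`-integer `[n]_q = 1 + q + ⋯ + q^(n-1)`. -/
noncomputable def qInt (q : ℂ) (n : ℕ) : ℂ := ∑ i ∈ Finset.range n, q ^ i

/-- The `q`-factorial `[n]_q!`. -/
noncomputable def qFact (q : ℂ) : ℕ → ℂ
  | 0 => 1
  | n + 1 => qFact q n * qInt q (n + 1)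

/-- The Gaussian (`q`-binomial) coefficient. -/
noncomputable def qBinom (q : ℂ) (n k : ℕ) : ℂ := qFact q n / (qFact q k * qFact q (n - k))

/-- The formal power series `e_q(tx) = ∑ x^n t^n/[n]_q!`. -/
noncomputable def qExpSeries (q : ℂ) (x : ℂ) : PowerSeries ℂ :=
  PowerSeries.mk fun n => x ^ n / qFact q n

/-- The formal power series `E_q(ty) = ∑ q^(n(n-1)/2) y^n t^n/[n]_q!`. -/
noncomputable def qExpSeries' (q : ℂ) (y : ℂ) : PowerSeries ℂ :=
  PowerSeries.mk fun n => q ^ (n * (n - 1) / 2) * y ^ n / qFact q n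

/-- Generating series `(2t/(e_q(t)+1))^α e_q(tx) E_q(ty)` of the `q`-Genocchi polynomials. -/
noncomputable def qGenocchiSeries (q : ℂ) (α : ℕ) (x y : ℂ) : PowerSeries ℂ :=
  (PowerSeries.C (2 : ℂ) * PowerSeries.X * (qExpSeries q 1 + 1)⁻¹) ^ α *
    qExpSeries q x * qExpSeries' q y

/-- The `q`-Genocchi polynomial `𝔊_{n,q}^{(α)}(x,y)`. -/
noncomputable def qGenocchi (q : ℂ) (α : ℕ) (x y : ℂ) (n : ℕ) : ℂ :=
  qFact q n * PowerSeries.coeff n (qGenocchiSeries q α x y)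

/-- The `q`-Bernoulli polynomial `𝔅_{n,q}(x,y)`, defined via
`(t/(e_q(t)-1)) e_q(tx) E_q(ty) = ∑ 𝔅_{n,q}(x,y) t^n/[n]_q!`
(note `t/(e_q(t)-1)` is the inverse of the series `∑ t^n/[n+1]_q!`). -/
noncomputable def qBernoulli (q : ℂ) (x y : ℂ) (n : ℕ) : ℂ :=
  qFact q n * PowerSeries.coeff n
    ((PowerSeries.mk fun k => (qFact q (k + 1))⁻¹)⁻¹ * qExpSeries q x * qExpSeries' q y)

/-- The Gauss polynomial `(x+y)_q^n = ∑_k [n k]_q q^(k(k-1)/2) x^(n-k) y^k`. -/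
noncomputable def qAddPow (q : ℂ) (x y : ℂ) (n : ℕ) : ℂ :=
  ∑ k ∈ Finset.range (n + 1), qBinom q n k * q ^ (k * (k - 1) / 2) * x ^ (n - k) * y ^ k

lemma qFact_ne_zero (q : ℂ) (hq : ∀ n : ℕ, qInt q (n + 1) ≠ 0) (n : ℕ) :
    qFact q n ≠ 0 := by
  induction n with
  | zero => simp [qFact]
  | succ n ih => exact mul_ne_zero ih (hq n)

lemma qInt_add (q : ℂ) (a b : ℕ) :
    qInt q (a + b) = qInt q a + q ^ a * qInt q b := by
  induction b with
  | zero => simp [qInt]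
  | succ b ih =>
    rw [show a + (b + 1) = (a + b) + 1 from rfl]
    unfold qInt at *
    rw [Finset.sum_range_succ, ih, Finset.sum_range_succ, pow_add]
    ring

lemma tri_succ (m : ℕ) : (m + 1) + (m + 1) * m / 2 = (m + 1) * (m + 2) / 2 := by
  obtain ⟨c, hc⟩ := Nat.even_mul_succ_self m
  have h1 : (m + 1) * m = 2 * c := by rw [Nat.mul_comm]; omega
  have h2 : (m + 1) * (m + 2) = 2 * (c + m + 1) := by
    rw [show (m + 1) * (m + 2) = (m + 1) * m + 2 * (m + 1) by ring, h1]; ring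
  rw [h1, h2, Nat.mul_div_cancel_left _ (by norm_num : 0 < 2),
    Nat.mul_div_cancel_left _ (by norm_num : 0 < 2)]
  omega

lemma qBinom_pascal (q : ℂ) (hq : ∀ n : ℕ, qInt q (n + 1) ≠ 0) (n j : ℕ)
    (hj : j + 1 ≤ n) :
    qBinom q (n + 1) (j + 1) = qBinom q n j + q ^ (j + 1) * qBinom q n (j + 1) := by
  unfold qBinom
  have h1 : qFact q (n + 1) = qFact q n * qInt q (n + 1) := rfl
  have h2 : qFact q (j + 1) = qFact q j * qInt q (j + 1) := rfl
  have hnj : n - j = (n - j - 1) + 1 := by omega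
  have h3 : qFact q (n - j) = qFact q (n - j - 1) * qInt q (n - j) := by
    rw [hnj]; rfl
  have h4 : qInt q (n + 1) = qInt q (j + 1) + q ^ (j + 1) * qInt q (n - j) := by
    rw [show n + 1 = (j + 1) + (n - j) by omega, qInt_add]
  have e1 : n + 1 - (j + 1) = n - j := by omega
  have e2 : n - (j + 1) = n - j - 1 := by omega
  rw [e1, e2, h1, h2, h3, h4]
  have f0 := qFact_ne_zero q hq
  have i1 : qInt q (j + 1) ≠ 0 := hq j
  have i2 : qInt q (n - j) ≠ 0 := by rw [hnj]; exact hq _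
  have i1' : qInt q (1 + j) ≠ 0 := by rw [Nat.add_comm]; exact hq j
  have j1 : qFact q j ≠ 0 := f0 j
  have j2 : qFact q (n - j - 1) ≠ 0 := f0 _
  field_simp

lemma qBinom_self (q : ℂ) (hq : ∀ n : ℕ, qInt q (n + 1) ≠ 0) (n : ℕ) :
    qBinom q n n = 1 := by
  unfold qBinom
  simp only [Nat.sub_self]
  rw [show qFact q 0 = 1 from rfl, mul_one,
    div_self (qFact_ne_zero q hq n)]

lemma qBinom_zero (q : ℂ) (hq : ∀ n : ℕ, qInt q (n + 1) ≠ 0) (n : ℕ) :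
    qBinom q n 0 = 1 := by
  unfold qBinom
  simp only [Nat.sub_zero]
  rw [show qFact q 0 = 1 from rfl, one_mul,
    div_self (qFact_ne_zero q hq n)]

lemma qAlt_sum (q : ℂ) (hq : ∀ n : ℕ, qInt q (n + 1) ≠ 0) (n : ℕ) :
    ∑ j ∈ Finset.range (n + 2),
      qBinom q (n + 1) j * q ^ (j * (j - 1) / 2) * (-1 : ℂ) ^ j = 0 := by
  set f : ℕ → ℂ := fun j => qBinom q (n + 1) j * q ^ (j * (j - 1) / 2) * (-1 : ℂ) ^ j
    with hf
  set g : ℕ → ℂ := fun j => qBinom q n j * q ^ (j * (j + 1) / 2) * (-1 : ℂ) ^ j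
    with hg
  have hmid : ∀ j ∈ Finset.range n, f (j + 1) = -(g j) + g (j + 1) := by
    intro j hj
    rw [Finset.mem_range] at hj
    have hp := qBinom_pascal q hq n j (by omega)
    simp only [hf, hg, Nat.add_sub_cancel, hp]
    have ex2 : q ^ (j + 1) * q ^ (j * (j + 1) / 2) = q ^ ((j + 1) * (j + 1 + 1) / 2) := by
      rw [← pow_add, show j * (j + 1) / 2 = (j + 1) * j / 2 by rw [Nat.mul_comm],
        tri_succ j]
    rw [show (j + 1) * j = j * (j + 1) from Nat.mul_comm _ _]
    linear_combination (qBinom q n (j + 1) * (-1 : ℂ) ^ (j + 1)) * ex2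
  have hsum : ∑ j ∈ Finset.range n, f (j + 1) = g n - g 0 := by
    rw [Finset.sum_congr rfl hmid, Finset.sum_add_distrib, Finset.sum_neg_distrib]
    have A : ∑ x ∈ Finset.range n, g (x + 1) = ∑ x ∈ Finset.range (n + 1), g x - g 0 := by
      rw [Finset.sum_range_succ' g n]; ring
    rw [A, Finset.sum_range_succ g n]
    ring
  rw [Finset.sum_range_succ' f (n + 1), Finset.sum_range_succ (fun k => f (k + 1)) n, hsum]
  have hg0 : g 0 = 1 := by simp [hg, qBinom_zero q hq]
  have hf0 : f 0 = 1 := by simp [hf, qBinom_zero q hq]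
  have hfn : f (n + 1) = -(g n) := by
    simp only [hf, hg, Nat.add_sub_cancel, qBinom_self q hq]
    rw [show (n + 1) * n / 2 = n * (n + 1) / 2 by rw [Nat.mul_comm], pow_succ]
    ring
  rw [hg0, hf0, hfn]
  ring

lemma qExp_mul (q : ℂ) (hq : ∀ n : ℕ, qInt q (n + 1) ≠ 0) :
    qExpSeries q 1 * qExpSeries' q (-1) = 1 := by
  rw [mul_comm]
  ext n
  cases n with
  | zero =>
    simp [PowerSeries.coeff_zero_eq_constantCoeff, qExpSeries, qExpSeries',
      show qFact q 0 = 1 from rfl]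
  | succ m =>
    rw [PowerSeries.coeff_mul, Finset.Nat.sum_antidiagonal_eq_sum_range_succ_mk]
    have hF := qFact_ne_zero q hq
    have : ∀ k ∈ Finset.range (m + 2),
        (PowerSeries.coeff k (qExpSeries' q (-1))) *
          (PowerSeries.coeff (m + 1 - k) (qExpSeries q 1)) =
        (qFact q (m + 1))⁻¹ *
          (qBinom q (m + 1) k * q ^ (k * (k - 1) / 2) * (-1 : ℂ) ^ k) := by
      intro k hk
      rw [Finset.mem_range] at hk
      simp only [qExpSeries, qExpSeries', PowerSeries.coeff_mk, one_pow, qBinom]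
      have h1 : qFact q k ≠ 0 := hF k
      have h2 : qFact q (m + 1 - k) ≠ 0 := hF _
      have h3 : qFact q (m + 1) ≠ 0 := hF _
      field_simp
    rw [Finset.sum_congr rfl this, ← Finset.mul_sum, qAlt_sum q hq m, mul_zero]
    simp [PowerSeries.coeff_one]

lemma qExp'_zero (q : ℂ) : qExpSeries' q 0 = 1 := by
  ext n
  cases n with
  | zero =>
    simp [qExpSeries', show qFact q 0 = 1 from rfl]
  | succ m =>
    simp [qExpSeries', PowerSeries.coeff_one, zero_pow]

lemma qGenocchi_series_eq (q : ℂ) (hq : ∀ n : ℕ, qInt q (n + 1) ≠ 0) (a : ℕ) (x : ℂ) :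
    qGenocchiSeries q (a + 1) x 0 + qGenocchiSeries q (a + 1) x (-1) =
      PowerSeries.C (2 : ℂ) * PowerSeries.X * qGenocchiSeries q a x (-1) := by
  unfold qGenocchiSeries
  rw [qExp'_zero]
  set e := qExpSeries q 1 with he
  set E := qExpSeries' q (-1) with hE
  set ex := qExpSeries q x with hex
  have hc : PowerSeries.constantCoeff (e + 1) ≠ 0 := by
    simp [he, qExpSeries, PowerSeries.constantCoeff_mk,
      show qFact q 0 = 1 from rfl]
  have hinv : (e + 1)⁻¹ * (e + 1) = 1 := by
    rw [mul_comm]; exact PowerSeries.mul_inv_cancel _ hc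
  have hm : e * E = 1 := qExp_mul q hq
  have h1 : (1 : PowerSeries ℂ) + E = E * (e + 1) := by
    rw [mul_add, mul_one, mul_comm E e, hm]
  set F := PowerSeries.C (2 : ℂ) * PowerSeries.X * (e + 1)⁻¹ with hF
  have step2 : F * (e + 1) = PowerSeries.C (2 : ℂ) * PowerSeries.X := by
    rw [hF, mul_assoc, hinv, mul_one]
  calc F ^ (a + 1) * ex * 1 + F ^ (a + 1) * ex * E
      = F ^ a * ex * E * (F * (e + 1)) := by rw [show F ^ (a+1) * ex * 1 + F ^ (a+1) * ex * E
          = F ^ (a+1) * ex * (1 + E) by ring, h1, pow_succ]; ring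
    _ = F ^ a * ex * E * (PowerSeries.C (2 : ℂ) * PowerSeries.X) := by rw [step2]
    _ = PowerSeries.C (2 : ℂ) * PowerSeries.X * (F ^ a * ex * E) := by ring

/-- Difference equation: `𝔊_{n,q}^{(α)}(x,0) + 𝔊_{n,q}^{(α)}(x,-1) = 2[n]_q 𝔊_{n-1,q}^{(α-1)}(x,-1)`. -/
theorem qGenocchi_difference_eq' (q : ℂ) (hq : ∀ n : ℕ, qInt q (n + 1) ≠ 0)
    (α n : ℕ) (hα : 1 ≤ α) (hn : 1 ≤ n) (x : ℂ) :
    qGenocchi q α x 0 n + qGenocchi q α x (-1) n =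
      2 * qInt q n * qGenocchi q (α - 1) x (-1) (n - 1) := by
  obtain ⟨a, rfl⟩ : ∃ a, α = a + 1 := ⟨α - 1, by omega⟩
  obtain ⟨m, rfl⟩ : ∃ m, n = m + 1 := ⟨n - 1, by omega⟩
  simp only [Nat.add_sub_cancel]
  unfold qGenocchi
  rw [← mul_add, ← map_add, qGenocchi_series_eq q hq a x, mul_assoc,
    PowerSeries.coeff_C_mul, PowerSeries.coeff_succ_X_mul,
    show qFact q (m + 1) = qFact q m * qInt q (m + 1) from rfl]
  ring
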